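/- A subset A ⊆ [m] × [n] is colorable with column weights u1,...,um and row weights v1,...,vn if and only if for every subset B ⊆ A, Σ_{i ∈ π1(B)} u_i + Σ_{j ∈ π2(B)} v_j ≥ |B|, where π1, π2 are the coordinate projections. -/

import Mathlib

/-- Color game criterion: a subset `A ⊆ [m] × [n]` is colorable with column budgets
`u i` (red) and row budgets `v j` (blue) — i.e. `A` can be partitioned into a red part
with at most `u i` points in column `i` and a blue part with at most `v j` points in
row `j` — iff every subset `B ⊆ A` satisfies
`|B| ≤ Σ_{i ∈ π₁(B)} u i + Σ_{j ∈ π₂(B)} v j`. -/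
theorem colorable_iff (m n : ℕ) (u : Fin m → ℕ) (v : Fin n → ℕ)
    (A : Finset (Fin m × Fin n)) :
    (∃ R B : Finset (Fin m × Fin n), R ∪ B = A ∧ Disjoint R B ∧
        (∀ i : Fin m, (R.filter fun p => p.1 = i).card ≤ u i) ∧
        (∀ j : Fin n, (B.filter fun p => p.2 = j).card ≤ v j)) ↔
      (∀ B ⊆ A, B.card ≤ ∑ i ∈ B.image Prod.fst, u i + ∑ j ∈ B.image Prod.snd, v j) := by
  classical
  constructor
  · rintro ⟨R, Bl, hRB, hdisj, hR, hBl⟩ B hB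
    have h1 : (B ∩ R).card ≤ ∑ i ∈ B.image Prod.fst, u i := by
      have := Finset.card_eq_sum_card_fiberwise (f := Prod.fst) (s := B ∩ R)
        (t := B.image Prod.fst) (fun x hx => Finset.mem_image_of_mem _ (Finset.mem_inter.1 hx).1)
      rw [this]
      refine Finset.sum_le_sum fun i _ => ?_
      refine le_trans (Finset.card_le_card ?_) (hR i)
      intro p hp
      simp only [Finset.mem_filter, Finset.mem_inter] at hp ⊢
      exact ⟨hp.1.2, hp.2⟩
    have h2 : (B ∩ Bl).card ≤ ∑ j ∈ B.image Prod.snd, v j := by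
      have := Finset.card_eq_sum_card_fiberwise (f := Prod.snd) (s := B ∩ Bl)
        (t := B.image Prod.snd) (fun x hx => Finset.mem_image_of_mem _ (Finset.mem_inter.1 hx).1)
      rw [this]
      refine Finset.sum_le_sum fun j _ => ?_
      refine le_trans (Finset.card_le_card ?_) (hBl j)
      intro p hp
      simp only [Finset.mem_filter, Finset.mem_inter] at hp ⊢
      exact ⟨hp.1.2, hp.2⟩
    calc B.card = (B ∩ (R ∪ Bl)).card := by rw [hRB, Finset.inter_eq_left.2 hB]
      _ = ((B ∩ R) ∪ (B ∩ Bl)).card := by rw [Finset.inter_union_distrib_left]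
      _ ≤ (B ∩ R).card + (B ∩ Bl).card := Finset.card_union_le _ _
      _ ≤ _ := add_le_add h1 h2
  · intro hB
    set σ := (Σ i : Fin m, Fin (u i)) ⊕ (Σ j : Fin n, Fin (v j)) with hσ
    set colS : Fin m → Finset σ :=
      fun i => Finset.univ.image (fun k : Fin (u i) => Sum.inl ⟨i, k⟩) with hcolS
    set rowS : Fin n → Finset σ :=
      fun j => Finset.univ.image (fun k : Fin (v j) => Sum.inr ⟨j, k⟩) with hrowS
    have colInj : ∀ i : Fin m, Function.Injective
        (fun k : Fin (u i) => (Sum.inl ⟨i, k⟩ : σ)) := by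
      intro i a b h
      simpa using h
    have rowInj : ∀ j : Fin n, Function.Injective
        (fun k : Fin (v j) => (Sum.inr ⟨j, k⟩ : σ)) := by
      intro j a b h
      simpa using h
    have colCard : ∀ i, (colS i).card = u i := by
      intro i
      rw [hcolS]
      rw [Finset.card_image_of_injective _ (colInj i), Finset.card_univ, Fintype.card_fin]
    have rowCard : ∀ j, (rowS j).card = v j := by
      intro j
      rw [hrowS]
      rw [Finset.card_image_of_injective _ (rowInj j), Finset.card_univ, Fintype.card_fin]
    set t : {p // p ∈ A} → Finset σ := fun p => colS p.1.1 ∪ rowS p.1.2 with ht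
    have hall : ∀ s : Finset {p // p ∈ A}, s.card ≤ (s.biUnion t).card := by
      intro s
      set Bs := s.image Subtype.val with hBs
      have hBsA : Bs ⊆ A := by
        intro p hp
        rcases Finset.mem_image.1 hp with ⟨q, _, rfl⟩
        exact q.2
      have hcard : Bs.card = s.card := Finset.card_image_of_injective _ Subtype.val_injective
      have hsplit : s.biUnion t =
          ((Bs.image Prod.fst).biUnion colS) ∪ ((Bs.image Prod.snd).biUnion rowS) := by
        ext x
        simp only [Finset.mem_biUnion, Finset.mem_union, Finset.mem_image, hBs, ht]
        constructor
        · rintro ⟨p, hp, hx | hx⟩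
          · exact Or.inl ⟨p.1.1, ⟨p.1, ⟨p, hp, rfl⟩, rfl⟩, hx⟩
          · exact Or.inr ⟨p.1.2, ⟨p.1, ⟨p, hp, rfl⟩, rfl⟩, hx⟩
        · rintro (⟨i, ⟨q, ⟨p, hp, rfl⟩, rfl⟩, hx⟩ | ⟨j, ⟨q, ⟨p, hp, rfl⟩, rfl⟩, hx⟩)
          · exact ⟨p, hp, Or.inl hx⟩
          · exact ⟨p, hp, Or.inr hx⟩
      have hdisjLR : Disjoint ((Bs.image Prod.fst).biUnion colS)
          ((Bs.image Prod.snd).biUnion rowS) := by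
        rw [Finset.disjoint_left]
        intro x hx hx'
        simp only [Finset.mem_biUnion, hcolS, hrowS, Finset.mem_image] at hx hx'
        obtain ⟨i, _, k, _, rfl⟩ := hx
        obtain ⟨j, _, k', _, h⟩ := hx'
        exact Sum.inl_ne_inr h.symm
      have hcardcol : ((Bs.image Prod.fst).biUnion colS).card
          = ∑ i ∈ Bs.image Prod.fst, u i := by
        rw [Finset.card_biUnion]
        · exact Finset.sum_congr rfl fun i _ => colCard i
        · intro i _ i' _ hne
          rw [Function.onFun_apply, Finset.disjoint_left]
          intro x hx hx'
          simp only [hcolS, Finset.mem_image] at hx hx'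
          obtain ⟨k, _, rfl⟩ := hx
          obtain ⟨k', _, h⟩ := hx'
          apply hne
          simpa using (congrArg (fun z => Sum.elim (Sigma.fst) (fun _ => i) z) h.symm)
      have hcardrow : ((Bs.image Prod.snd).biUnion rowS).card
          = ∑ j ∈ Bs.image Prod.snd, v j := by
        rw [Finset.card_biUnion]
        · exact Finset.sum_congr rfl fun j _ => rowCard j
        · intro j _ j' _ hne
          rw [Function.onFun_apply, Finset.disjoint_left]
          intro x hx hx'
          simp only [hrowS, Finset.mem_image] at hx hx'
          obtain ⟨k, _, rfl⟩ := hx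
          obtain ⟨k', _, h⟩ := hx'
          apply hne
          simpa using (congrArg (fun z => Sum.elim (fun _ => j) (Sigma.fst) z) h.symm)
      calc s.card = Bs.card := hcard.symm
        _ ≤ ∑ i ∈ Bs.image Prod.fst, u i + ∑ j ∈ Bs.image Prod.snd, v j := hB Bs hBsA
        _ = (s.biUnion t).card := by rw [hsplit, Finset.card_union_of_disjoint hdisjLR,
              hcardcol, hcardrow]
    obtain ⟨f, hfinj, hft⟩ := (Finset.all_card_le_biUnion_card_iff_exists_injective t).1 hall
    set R' : Finset {p // p ∈ A} := Finset.univ.filter (fun p => (f p).isLeft) with hR'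
    set B' : Finset {p // p ∈ A} := Finset.univ.filter (fun p => (f p).isRight) with hB'
    refine ⟨R'.image Subtype.val, B'.image Subtype.val, ?_, ?_, ?_, ?_⟩
    · ext p
      simp only [Finset.mem_union, Finset.mem_image, hR', hB', Finset.mem_filter,
        Finset.mem_univ, true_and]
      constructor
      · rintro (⟨q, _, rfl⟩ | ⟨q, _, rfl⟩) <;> exact q.2
      · intro hp
        rcases hfp : f ⟨p, hp⟩ with x | x
        · exact Or.inl ⟨⟨p, hp⟩, by simp [hfp], rfl⟩
        · exact Or.inr ⟨⟨p, hp⟩, by simp [hfp], rfl⟩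
    · rw [Finset.disjoint_left]
      rintro p hp hp'
      simp only [Finset.mem_image, hR', hB', Finset.mem_filter, Finset.mem_univ, true_and] at hp hp'
      obtain ⟨q, hq, rfl⟩ := hp
      obtain ⟨q', hq', hqq⟩ := hp'
      have : q' = q := Subtype.ext hqq
      subst this
      rw [Sum.isRight_iff] at hq'
      obtain ⟨x, hx⟩ := hq'
      rw [hx] at hq
      simp at hq
    · intro i
      have himg : ((R'.image Subtype.val).filter fun p => p.1 = i)
          = ((R'.filter fun p => p.1.1 = i).image Subtype.val) := by
        ext p
        simp [Finset.mem_filter, Finset.mem_image]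
      rw [himg, Finset.card_image_of_injective _ Subtype.val_injective]
      have hsub : ((R'.filter fun p => p.1.1 = i).image f) ⊆ colS i := by
        intro x hx
        rcases Finset.mem_image.1 hx with ⟨q, hq, rfl⟩
        simp only [hR', Finset.mem_filter, Finset.mem_univ, true_and] at hq
        have hmem := hft q
        rw [ht] at hmem
        rcases Finset.mem_union.1 hmem with h | h
        · rwa [hq.2] at h
        · exfalso
          simp only [hrowS, Finset.mem_image] at h
          obtain ⟨k, _, hk⟩ := h
          rw [← hk] at hq
          simp at hq
      calc (R'.filter fun p => p.1.1 = i).card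
          = ((R'.filter fun p => p.1.1 = i).image f).card :=
            (Finset.card_image_of_injective _ hfinj).symm
        _ ≤ (colS i).card := Finset.card_le_card hsub
        _ = u i := colCard i
    · intro j
      have himg : ((B'.image Subtype.val).filter fun p => p.2 = j)
          = ((B'.filter fun p => p.1.2 = j).image Subtype.val) := by
        ext p
        simp [Finset.mem_filter, Finset.mem_image]
      rw [himg, Finset.card_image_of_injective _ Subtype.val_injective]
      have hsub : ((B'.filter fun p => p.1.2 = j).image f) ⊆ rowS j := by
        intro x hx
        rcases Finset.mem_image.1 hx with ⟨q, hq, rfl⟩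
        simp only [hB', Finset.mem_filter, Finset.mem_univ, true_and] at hq
        have hmem := hft q
        rw [ht] at hmem
        rcases Finset.mem_union.1 hmem with h | h
        · exfalso
          simp only [hcolS, Finset.mem_image] at h
          obtain ⟨k, _, hk⟩ := h
          rw [← hk] at hq
          simp at hq
        · rwa [hq.2] at h
      calc (B'.filter fun p => p.1.2 = j).card
          = ((B'.filter fun p => p.1.2 = j).image f).card :=
            (Finset.card_image_of_injective _ hfinj).symm
        _ ≤ (rowS j).card := Finset.card_le_card hsub
        _ = v j := rowCard j
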